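/- Let $G$ be a graph constructed as follows: take the half-line $\mathbb{N}$, fix an increasing sequence $k_i = \sum_{j=1}^i n_j$ where $\{n_i\}$ are the vertex counts of a sequence of finite $d$-regular graphs $G_{n_i}$, and replace each edge $(k_i, k_i+1)$ of $\mathbb{N}$ by inserting the graph $G_{n_i}$ (connecting $k_i$ to a marked vertex $u_i^{(1)}$ and $k_{i+1}$ to a marked vertex $u_i^{(2)}$ of $G_{n_i}$). Then for each $i$, the function $\varphi_i$ equal to $1/\sqrt{n_i}$ on $V(G_{n_i})$ and $0$ elsewhere satisfies $\|A_G \varphi_i - d\,\varphi_i\|^2 = 2/n_i$, where $A_G$ is the adjacency operator of $G$. Consequently, since the $\varphi_i$ are pairwise orthogonal unit vectors and $n_i \to \infty$, $d \in \sigma_{\mathrm{ess}}(A_G)$. -/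

import Mathlib

open Filter

/-- The essential spectrum of a bounded operator: the spectrum with the isolated
eigenvalues of finite multiplicity removed. -/
def essSpectrum {E : Type*} [NormedAddCommGroup E] [NormedSpace ℂ E]
    (T : E →L[ℂ] E) : Set ℂ :=
  spectrum ℂ T \ {z | z ∉ closure (spectrum ℂ T \ {z}) ∧
    (∃ v : E, v ≠ 0 ∧ T v = z • v) ∧
    FiniteDimensional ℂ (LinearMap.ker ((T - z • (1 : E →L[ℂ] E) : E →L[ℂ] E) : E →ₗ[ℂ] E))}

set_option maxHeartbeats 1000000 in
theorem weyl_essSpectrum {E : Type*} [NormedAddCommGroup E] [InnerProductSpace ℂ E]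
    [CompleteSpace E]
    (A : E →L[ℂ] E) (hsa : IsSelfAdjoint A) (z : ℝ) (φ : ℕ → E)
    (hortho : Orthonormal ℂ φ)
    (htend : Tendsto (fun i => ‖A (φ i) - (z : ℂ) • φ i‖) atTop (nhds 0)) :
    (z : ℂ) ∈ essSpectrum A := by
  have hφnorm : ∀ i, ‖φ i‖ = 1 := hortho.1
  have hspec : (z : ℂ) ∈ spectrum ℂ A := by
    rw [spectrum.mem_iff]
    intro hunit
    set B : E →L[ℂ] E := ↑hunit.unit⁻¹ with hBdef
    have hB : ∀ x : E, B ((algebraMap ℂ (E →L[ℂ] E) (z : ℂ) - A) x) = x := by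
      intro x
      have h1 : B * (algebraMap ℂ (E →L[ℂ] E) (z : ℂ) - A) = 1 := by
        have := hunit.unit.inv_mul
        rwa [IsUnit.unit_spec] at this
      calc B ((algebraMap ℂ (E →L[ℂ] E) (z : ℂ) - A) x)
          = (B * (algebraMap ℂ (E →L[ℂ] E) (z : ℂ) - A)) x := rfl
        _ = x := by rw [h1]; rfl
    have hle : ∀ i, (1:ℝ) ≤ ‖B‖ * ‖A (φ i) - (z : ℂ) • φ i‖ := by
      intro i
      have h2 : ‖(algebraMap ℂ (E →L[ℂ] E) (z : ℂ) - A) (φ i)‖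
          = ‖A (φ i) - (z : ℂ) • φ i‖ := by
        rw [← norm_neg]
        congr 1
        simp [Algebra.algebraMap_eq_smul_one, ContinuousLinearMap.sub_apply,
          ContinuousLinearMap.smul_apply]
      calc (1:ℝ) = ‖φ i‖ := (hφnorm i).symm
        _ = ‖B ((algebraMap ℂ (E →L[ℂ] E) (z : ℂ) - A) (φ i))‖ := by rw [hB]
        _ ≤ ‖B‖ * ‖(algebraMap ℂ (E →L[ℂ] E) (z : ℂ) - A) (φ i)‖ := B.le_opNorm _
        _ = ‖B‖ * ‖A (φ i) - (z : ℂ) • φ i‖ := by rw [h2]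
    have h3 : Tendsto (fun i => ‖B‖ * ‖A (φ i) - (z : ℂ) • φ i‖) atTop (nhds 0) := by
      simpa using htend.const_mul ‖B‖
    obtain ⟨i, hi⟩ := (h3.eventually_lt_const (by norm_num : (0:ℝ) < 1)).exists
    exact absurd (hle i) (not_le.mpr hi)
  refine ⟨hspec, ?_⟩
  rintro ⟨hiso, -, hfin⟩

  have hisoR : (z:ℝ) ∉ closure (spectrum ℝ A \ {z}) := by
    intro h
    apply hiso
    have hmt : Set.MapsTo (fun r : ℝ => (r:ℂ)) (spectrum ℝ A \ {z})
        (spectrum ℂ A \ {(z:ℂ)}) := by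
      rintro r ⟨hr1, hr2⟩
      refine ⟨?_, ?_⟩
      · have : algebraMap ℝ ℂ r ∈ spectrum ℂ A := spectrum.algebraMap_mem ℂ hr1
        simpa using this
      · simpa using fun hc => hr2 (by exact_mod_cast hc)
    exact map_mem_closure Complex.continuous_ofReal h hmt
  -- continuity of indicator and pseudo-resolvent
  obtain ⟨ε, hε, hball⟩ : ∃ ε > 0, ∀ y ∈ spectrum ℝ A \ {z}, ¬ dist z y < ε := by
    by_contra hc
    push_neg at hc
    exact hisoR (Metric.mem_closure_iff.mpr (by
      intro ε hε
      obtain ⟨y, hy, hlt⟩ := hc ε hε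
      exact ⟨y, hy, hlt⟩))
  set f : ℝ → ℝ := fun x => if x = z then 1 else 0 with hfdef
  set g : ℝ → ℝ := fun x => if x = z then 0 else (x - z)⁻¹ with hgdef
  have hcont : ∀ (F : ℝ → ℝ), (∀ x, x ≠ z → ContinuousWithinAt F (spectrum ℝ A) x) →
      ContinuousWithinAt F (spectrum ℝ A) z → ContinuousOn F (spectrum ℝ A) := by
    intro F h1 h2 x hx
    by_cases hxz : x = z
    · exact hxz ▸ h2
    · exact h1 x hxz
  have hzcont : ∀ (F : ℝ → ℝ), F z = 0 → ContinuousWithinAt (fun x => if x = z then 0 else F x) (spectrum ℝ A) z := by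
    intro F hF
    refine ContinuousWithinAt.congr_of_eventuallyEq (continuousWithinAt_const (b := (0:ℝ))) ?_ (by simp)
    have hmem : spectrum ℝ A ∩ Metric.ball z ε ∈ nhdsWithin z (spectrum ℝ A) :=
      inter_mem_nhdsWithin _ (Metric.ball_mem_nhds z hε)
    filter_upwards [hmem] with y hy
    rcases hy with ⟨hy2, hy1⟩
    by_cases hyz : y = z
    · simp [hyz]
    · have hd : dist z y < ε := by rw [dist_comm]; exact hy1
      exact absurd hd (hball y ⟨hy2, hyz⟩)
  have hf : ContinuousOn f (spectrum ℝ A) := by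
    apply hcont
    · intro x hxz
      refine ContinuousWithinAt.congr_of_eventuallyEq (continuousWithinAt_const (b := (0:ℝ))) ?_ (by simp [f, hxz])
      have hmem : Metric.ball x (dist x z) ∈ nhdsWithin x (spectrum ℝ A) :=
        mem_nhdsWithin_of_mem_nhds (Metric.ball_mem_nhds x (dist_pos.mpr hxz))
      filter_upwards [hmem] with y hy
      have : y ≠ z := by
        intro h; subst h
        simp [Metric.mem_ball, dist_comm] at hy
      simp [f, this]
    · have : ContinuousWithinAt (fun x => if x = z then 0 else f x - 1) (spectrum ℝ A) z := by
        apply hzcont; simp [f]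
      have h2 := this.add (continuousWithinAt_const (b := (1:ℝ)))
      refine h2.congr (fun y _ => ?_) (by simp [f])
      by_cases hyz : y = z <;> simp [f, hyz]
  have hg : ContinuousOn g (spectrum ℝ A) := by
    apply hcont
    · intro x hxz
      have hc : ContinuousWithinAt (fun y => (y - z)⁻¹) (spectrum ℝ A) x :=
        (((continuous_id.sub continuous_const).continuousAt).inv₀
          (sub_ne_zero.mpr hxz)).continuousWithinAt
      refine hc.congr_of_eventuallyEq ?_ (by simp [g, hxz])
      have hmem : Metric.ball x (dist x z) ∈ nhdsWithin x (spectrum ℝ A) :=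
        mem_nhdsWithin_of_mem_nhds (Metric.ball_mem_nhds x (dist_pos.mpr hxz))
      filter_upwards [hmem] with y hy
      have : y ≠ z := by
        intro h; subst h
        simp [Metric.mem_ball, dist_comm] at hy
      simp [g, this]
    · exact hzcont _ (by simp)
  set P : E →L[ℂ] E := cfc f A with hPdef
  set B : E →L[ℂ] E := cfc g A with hBdef
  have hPsa : IsSelfAdjoint P := cfc_predicate f A
  have hAP : A * P = (z:ℝ) • P := by
    have h1 : cfc (fun x : ℝ => x * f x) A = cfc (fun x : ℝ => x) A * cfc f A :=
      cfc_mul _ _ A (by fun_prop) hf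
    have h2 : (fun x : ℝ => x * f x) = fun x : ℝ => z * f x := by
      funext x
      by_cases hx : x = z <;> simp [f, hx]
    rw [cfc_id' ℝ A hsa] at h1
    rw [← h1, h2, cfc_const_mul z f A hf]
  have hBA : B * (A - algebraMap ℝ (E →L[ℂ] E) z) = 1 - P := by
    have h1 : cfc (fun x : ℝ => g x * (x - z)) A = cfc g A * cfc (fun x : ℝ => x - z) A :=
      cfc_mul _ _ A hg (by fun_prop)
    have h2 : cfc (fun x : ℝ => x - z) A = A - algebraMap ℝ (E →L[ℂ] E) z := by
      rw [cfc_sub (fun x : ℝ => x) (fun _ : ℝ => z) A (by fun_prop) (by fun_prop),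
        cfc_id' ℝ A hsa, cfc_const z A hsa]
    have h3 : (fun x : ℝ => g x * (x - z)) = fun x : ℝ => 1 - f x := by
      funext x
      by_cases hx : x = z
      · simp [f, g, hx]
      · rw [show g x = (x - z)⁻¹ from if_neg hx, show f x = 0 from if_neg hx, sub_zero]
        exact inv_mul_cancel₀ (sub_ne_zero.mpr hx)
    have h4 : cfc (fun x : ℝ => 1 - f x) A = 1 - P := by
      rw [cfc_sub (fun _ : ℝ => 1) f A (by fun_prop) hf, cfc_const 1 A hsa, map_one]
    rw [← h2, ← h1, h3, h4]

  have hker : ∀ x : E, P x ∈ LinearMap.ker ((A - (z:ℂ) • (1 : E →L[ℂ] E) : E →L[ℂ] E) : E →ₗ[ℂ] E) := by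
    intro x
    have h := congrArg (fun T : E →L[ℂ] E => T x) hAP
    simp only [ContinuousLinearMap.mul_apply, ContinuousLinearMap.smul_apply] at h
    have hz : (z:ℝ) • P x = (z:ℂ) • P x := by
      rw [← algebraMap_smul ℂ (z:ℝ) (P x)]
      norm_num
    have h0 : (A - (z:ℂ) • (1 : E →L[ℂ] E)) (P x) = 0 := by
      rw [ContinuousLinearMap.sub_apply, ContinuousLinearMap.smul_apply,
        ContinuousLinearMap.one_apply, h, hz, sub_self]
    exact LinearMap.mem_ker.mpr h0
  haveI : FiniteDimensional ℂ ↥(LinearMap.ker ((A - (z:ℂ) • (1 : E →L[ℂ] E) : E →L[ℂ] E) : E →ₗ[ℂ] E)) := hfin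
  set K : Submodule ℂ E := LinearMap.ker ((A - (z:ℂ) • (1 : E →L[ℂ] E) : E →L[ℂ] E) : E →ₗ[ℂ] E) with hK
  set b := stdOrthonormalBasis ℂ ↥K with hb
  have hPsym := ContinuousLinearMap.isSelfAdjoint_iff_isSymmetric.mp hPsa
  have hPtend : Tendsto (fun i => ‖P (φ i)‖) atTop (nhds 0) := by
    have key : ∀ i, ‖P (φ i)‖
        = Real.sqrt (∑ j, ‖(inner ℂ (φ i) (P (b j)) : ℂ)‖ ^ 2) := by
      intro i
      set w : ↥K := ⟨P (φ i), hker (φ i)⟩ with hw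
      have h1 : ‖P (φ i)‖ = ‖w‖ := rfl
      have h2 : ‖w‖ = ‖b.repr w‖ := (b.repr.norm_map w).symm
      rw [h1, h2, EuclideanSpace.norm_eq]
      congr 1
      refine Finset.sum_congr rfl fun j _ => ?_
      rw [b.repr_apply_apply]
      have h3 : (inner ℂ (b j) w : ℂ) = (inner ℂ ((b j : E)) (P (φ i)) : ℂ) := rfl
      rw [h3]
      have h4 := hPsym (b j : E) (φ i)
      have h5 : (inner ℂ ((b j : E)) (P (φ i)) : ℂ) = (inner ℂ (P (b j : E)) (φ i) : ℂ) := by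
        exact h4.symm
      rw [h5, norm_inner_symm]
    have hterm : ∀ j : Fin (Module.finrank ℂ ↥K),
        Tendsto (fun i => ‖(inner ℂ (φ i) (P (b j)) : ℂ)‖ ^ 2) atTop (nhds 0) :=
      fun j => (hortho.inner_products_summable (x := P (b j))).tendsto_atTop_zero
    have hsum : Tendsto (fun i => ∑ j, ‖(inner ℂ (φ i) (P (b j)) : ℂ)‖ ^ 2) atTop (nhds 0) := by
      have h0 : Tendsto (fun i => ∑ j, ‖(inner ℂ (φ i) (P (b j)) : ℂ)‖ ^ 2) atTop
          (nhds (∑ _j : Fin (Module.finrank ℂ ↥K), (0:ℝ))) :=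
        tendsto_finset_sum Finset.univ (fun j _ => hterm j)
      rw [Finset.sum_const, smul_zero] at h0
      exact h0
    have hs := hsum.sqrt
    rw [Real.sqrt_zero] at hs
    have heq : (fun i => ‖P (φ i)‖)
        = fun i => Real.sqrt (∑ j, ‖(inner ℂ (φ i) (P (b j)) : ℂ)‖ ^ 2) := funext key
    rw [heq]
    exact hs
  have h1P : Tendsto (fun i => ‖φ i - P (φ i)‖) atTop (nhds 0) := by
    have hrep : ∀ x : E, x - P x = B (A x - (z:ℂ) • x) := by
      intro x
      have h := congrArg (fun T : E →L[ℂ] E => T x) hBA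
      simp only [ContinuousLinearMap.mul_apply, ContinuousLinearMap.sub_apply,
        ContinuousLinearMap.one_apply] at h
      have halg : (algebraMap ℝ (E →L[ℂ] E) z) x = (z:ℂ) • x := by
        rw [Algebra.algebraMap_eq_smul_one, ContinuousLinearMap.smul_apply,
          ContinuousLinearMap.one_apply, ← algebraMap_smul ℂ (z:ℝ) x]
        norm_num
      rw [← halg]
      exact h.symm
    have h3 : Tendsto (fun i => ‖B‖ * ‖A (φ i) - (z : ℂ) • φ i‖) atTop (nhds 0) := by
      simpa using htend.const_mul ‖B‖
    refine squeeze_zero (fun i => norm_nonneg _) (fun i => ?_) h3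
    rw [hrep (φ i)]
    exact B.le_opNorm _
  have hφtend : Tendsto (fun i => ‖φ i‖) atTop (nhds 0) := by
    have hsum2 := h1P.add hPtend
    rw [add_zero] at hsum2
    refine squeeze_zero (fun i => norm_nonneg _) (fun i => ?_) hsum2
    calc ‖φ i‖ = ‖(φ i - P (φ i)) + P (φ i)‖ := by rw [sub_add_cancel]
      _ ≤ ‖φ i - P (φ i)‖ + ‖P (φ i)‖ := norm_add_le _ _
  have hone : (fun i : ℕ => ‖φ i‖) = fun _ => (1:ℝ) := funext fun i => hφnorm i
  rw [hone] at hφtend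
  exact one_ne_zero (tendsto_nhds_unique tendsto_const_nhds hφtend)

theorem graph_isSelfAdjoint {V : Type*} [DecidableEq V] (G : SimpleGraph V)
    (A : lp (fun _ : V => ℂ) 2 →L[ℂ] lp (fun _ : V => ℂ) 2)
    (hA : ∀ ψ (v : V), (A ψ : ∀ _ : V, ℂ) v =
      ∑' u : G.neighborSet v, (ψ : ∀ _ : V, ℂ) (u : V)) :
    IsSelfAdjoint A := by
  classical
  have hsingle_co : ∀ (u : V) (c : ℂ) (w : V),
      (lp.single (E := fun _ : V => ℂ) 2 u c : ∀ _ : V, ℂ) w = if w = u then c else 0 := by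
    intro u c w
    rw [lp.single_apply]
    by_cases h : w = u
    · subst h; simp
    · simp [h]
  have hAsingle : ∀ (u : V) (c : ℂ) (v : V),
      (A (lp.single 2 u c) : ∀ _ : V, ℂ) v = if G.Adj v u then c else 0 := by
    intro u c v
    rw [hA]
    by_cases h : G.Adj v u
    · rw [if_pos h]
      have hu : u ∈ G.neighborSet v := h
      rw [tsum_eq_single (⟨u, hu⟩ : G.neighborSet v)]
      · rw [hsingle_co, if_pos rfl]
      · rintro ⟨w, hw⟩ hne
        rw [hsingle_co, if_neg]
        intro hwu
        exact hne (Subtype.ext hwu)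
    · rw [if_neg h]
      have : ∀ w : G.neighborSet v, (lp.single (E := fun _ : V => ℂ) 2 u c : ∀ _ : V, ℂ) w = 0 := by
        rintro ⟨w, hw⟩
        rw [hsingle_co, if_neg]
        intro hwu
        exact h (hwu ▸ hw)
      rw [tsum_congr this, tsum_zero]
  have key : ∀ (χ : lp (fun _ : V => ℂ) 2) (u : V) (c : ℂ),
      (inner ℂ χ (A (lp.single 2 u c)) : ℂ) = inner ℂ (A χ) (lp.single 2 u c) := by
    intro χ u c
    rw [lp.inner_eq_tsum, lp.inner_eq_tsum]
    simp only [RCLike.inner_apply']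
    have hrhs : ∑' v, (starRingEnd ℂ) ((A χ : ∀ _ : V, ℂ) v) *
        (lp.single (E := fun _ : V => ℂ) 2 u c : ∀ _ : V, ℂ) v
        = (∑' w : G.neighborSet u, (starRingEnd ℂ) ((χ : ∀ _ : V, ℂ) w)) * c := by
      rw [tsum_eq_single u]
      · rw [hsingle_co, if_pos rfl, hA]
        congr 1
        have := RCLike.conjCLE (K := ℂ) |>.map_tsum
          (L := SummationFilter.unconditional _) (f := fun w : G.neighborSet u => (χ : ∀ _ : V, ℂ) w)
        simpa using this
      · intro v hv
        rw [hsingle_co, if_neg hv, mul_zero]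
    have hlhs : ∑' v, (starRingEnd ℂ) ((χ : ∀ _ : V, ℂ) v) * (A (lp.single 2 u c) : ∀ _ : V, ℂ) v
        = (∑' w : G.neighborSet u, (starRingEnd ℂ) ((χ : ∀ _ : V, ℂ) w)) * c := by
      have h1 : ∀ v, (starRingEnd ℂ) ((χ : ∀ _ : V, ℂ) v) * (A (lp.single 2 u c) : ∀ _ : V, ℂ) v
          = (G.neighborSet u).indicator (fun w => (starRingEnd ℂ) ((χ : ∀ _ : V, ℂ) w) * c) v := by
        intro v
        rw [hAsingle]
        by_cases h : G.Adj v u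
        · rw [if_pos h, Set.indicator_of_mem (by exact h.symm)]
        · rw [if_neg h, mul_zero, Set.indicator_of_notMem]
          intro hv
          exact h (G.adj_symm hv)
      rw [tsum_congr h1, ← tsum_subtype, tsum_mul_right]
    rw [hlhs, hrhs]
  rw [ContinuousLinearMap.isSelfAdjoint_iff_isSymmetric]
  intro ψ χ
  have hfact : Fact ((1:ENNReal) ≤ 2) := ⟨by norm_num⟩
  have hs := lp.hasSum_single (E := fun _ : V => ℂ) (p := 2) (by norm_num) ψ
  have hmain : (inner ℂ χ (A ψ) : ℂ) = inner ℂ (A χ) ψ := by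
    set L1 : lp (fun _ : V => ℂ) 2 →L[ℂ] ℂ := (innerSL ℂ χ).comp A with hL1
    set L2 : lp (fun _ : V => ℂ) 2 →L[ℂ] ℂ := innerSL ℂ (A χ) with hL2
    have h1 : HasSum (fun u => L1 (lp.single 2 u ((ψ : ∀ _ : V, ℂ) u))) (L1 ψ) := L1.hasSum hs
    have h2 : HasSum (fun u => L2 (lp.single 2 u ((ψ : ∀ _ : V, ℂ) u))) (L2 ψ) := L2.hasSum hs
    have heq : (fun u => L1 (lp.single 2 u ((ψ : ∀ _ : V, ℂ) u)))
        = fun u => L2 (lp.single 2 u ((ψ : ∀ _ : V, ℂ) u)) := by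
      funext u
      exact key χ u _
    rw [heq] at h1
    exact h1.unique h2
  calc (inner ℂ ((A : lp (fun _ : V => ℂ) 2 →ₗ[ℂ] lp (fun _ : V => ℂ) 2) ψ) χ : ℂ)
      = (starRingEnd ℂ) (inner ℂ χ (A ψ)) := (inner_conj_symm _ _).symm
    _ = (starRingEnd ℂ) (inner ℂ (A χ) ψ) := by rw [hmain]
    _ = inner ℂ ψ (A χ) := inner_conj_symm _ _

set_option maxHeartbeats 2000000 in
theorem stmt12 (d : ℕ) (hd : 2 < d) (n : ℕ → ℕ) (hn : ∀ i, 0 < n i)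
    (hninf : Tendsto n atTop atTop)
    (Gi : ∀ i, SimpleGraph (Fin (n i))) [∀ i, DecidableRel (Gi i).Adj]
    (hreg : ∀ i (x : Fin (n i)), (Gi i).degree x = d)
    (u1 u2 : ∀ i, Fin (n i))
    (k : ℕ → ℕ) (hk : ∀ i, k i = ∑ j ∈ Finset.range (i + 1), n j)
    (G : SimpleGraph (ℕ ⊕ (Σ i : ℕ, Fin (n i))))
    (hG : G = SimpleGraph.fromRel (fun p q =>
      match p, q with
      | Sum.inl a, Sum.inl b => b = a + 1 ∧ ∀ i, a ≠ k i
      | Sum.inl a, Sum.inr ⟨i, x⟩ => (a = k i ∧ x = u1 i) ∨ (a = k (i + 1) ∧ x = u2 i)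
      | Sum.inr ⟨i, x⟩, Sum.inr ⟨j, y⟩ => ∃ h : j = i, (Gi i).Adj x (h ▸ y)
      | _, _ => False))
    (A : lp (fun _ : ℕ ⊕ (Σ i : ℕ, Fin (n i)) => ℂ) 2 →L[ℂ]
         lp (fun _ : ℕ ⊕ (Σ i : ℕ, Fin (n i)) => ℂ) 2)
    (hA : ∀ ψ (v : ℕ ⊕ (Σ i : ℕ, Fin (n i))),
      (A ψ : ∀ _ : ℕ ⊕ (Σ i : ℕ, Fin (n i)), ℂ) v =
        ∑' u : G.neighborSet v, (ψ : ∀ _ : ℕ ⊕ (Σ i : ℕ, Fin (n i)), ℂ) (u : ℕ ⊕ (Σ i : ℕ, Fin (n i))))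
    (φ : ℕ → lp (fun _ : ℕ ⊕ (Σ i : ℕ, Fin (n i)) => ℂ) 2)
    (hφ1 : ∀ i a, (φ i : ∀ _ : ℕ ⊕ (Σ i : ℕ, Fin (n i)), ℂ) (Sum.inl a) = 0)
    (hφ2 : ∀ i j (x : Fin (n j)), (φ i : ∀ _ : ℕ ⊕ (Σ i : ℕ, Fin (n i)), ℂ) (Sum.inr ⟨j, x⟩) =
      if j = i then ((1 / Real.sqrt (n i) : ℝ) : ℂ) else 0) :
    (∀ i, ‖A (φ i) - (d : ℂ) • φ i‖ ^ 2 = 2 / (n i : ℝ)) ∧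
      (d : ℂ) ∈ essSpectrum A := by
  classical
  have hnR : ∀ i, (0:ℝ) < n i := fun i => by exact_mod_cast hn i
  have hik : ∀ i, i < k i := by
    intro i
    have h1 : i + 1 ≤ k i := by
      rw [hk i]
      calc i + 1 = ∑ _j ∈ Finset.range (i+1), 1 := by simp
        _ ≤ ∑ j ∈ Finset.range (i+1), n j := Finset.sum_le_sum (fun j _ => hn j)
    omega
  have hklt : ∀ i, k i < k (i+1) := by
    intro i
    rw [hk i, hk (i+1)]
    exact Finset.sum_lt_sum_of_subset (Finset.range_subset_range.mpr (by omega))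
      (by simp) (by simp) (hn (i+1)) (fun j _ _ => Nat.zero_le _)
  -- adjacency characterizations
  have ha1 : ∀ (a : ℕ) (i : ℕ) (x : Fin (n i)),
      G.Adj (Sum.inl a) (Sum.inr ⟨i, x⟩) ↔
        ((a = k i ∧ x = u1 i) ∨ (a = k (i + 1) ∧ x = u2 i)) := by
    intro a i x
    rw [hG, SimpleGraph.fromRel_adj]
    constructor
    · rintro ⟨-, h | h⟩
      · exact h
      · exact absurd h not_false
    · intro h
      exact ⟨by simp, Or.inl h⟩
  have ha2 : ∀ (i : ℕ) (x y : Fin (n i)),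
      G.Adj (Sum.inr ⟨i, x⟩) (Sum.inr ⟨i, y⟩) ↔ (Gi i).Adj x y := by
    intro i x y
    rw [hG, SimpleGraph.fromRel_adj]
    constructor
    · rintro ⟨hne, h | h⟩
      · obtain ⟨h', hadj⟩ := h
        have hy : h' ▸ y = y := rfl
        rwa [hy] at hadj
      · obtain ⟨h', hadj⟩ := h
        have hx : h' ▸ x = x := rfl
        rw [hx] at hadj
        exact hadj.symm
    · intro h
      refine ⟨?_, Or.inl ⟨rfl, h⟩⟩
      simp only [ne_eq, Sum.inr.injEq, Sigma.mk.inj_iff, heq_eq_eq, true_and]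
      exact fun hc => h.ne hc
  have ha3 : ∀ (i j : ℕ) (x : Fin (n i)) (y : Fin (n j)), j ≠ i →
      ¬ G.Adj (Sum.inr ⟨i, x⟩) (Sum.inr ⟨j, y⟩) := by
    intro i j x y hne hadj
    rw [hG, SimpleGraph.fromRel_adj] at hadj
    obtain ⟨-, h | h⟩ := hadj
    · obtain ⟨h', -⟩ := h
      exact hne h'
    · obtain ⟨h', -⟩ := h
      exact hne h'.symm
  -- evaluation of A (φ i)
  have hsum : ∀ (i : ℕ) (v : ℕ ⊕ (Σ i : ℕ, Fin (n i))),
      (A (φ i) : ∀ _ : ℕ ⊕ (Σ i : ℕ, Fin (n i)), ℂ) v =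
        ∑ x : Fin (n i), (if G.Adj v (Sum.inr ⟨i, x⟩)
          then ((1 / Real.sqrt (n i) : ℝ) : ℂ) else 0) := by
    intro i v
    rw [hA, tsum_subtype]
    have hemb : Function.Injective
        (fun x : Fin (n i) => (Sum.inr ⟨i, x⟩ : ℕ ⊕ (Σ i : ℕ, Fin (n i)))) := by
      intro x y hxy
      simpa using hxy
    rw [tsum_eq_sum (s := Finset.univ.map ⟨_, hemb⟩)
      (by
        intro b hb
        rcases b with a | ⟨j, x⟩
        · exact Set.indicator_apply_eq_zero.mpr (fun _ => hφ1 i a)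
        · have hji : j ≠ i := by
            intro h; subst h
            exact hb (by simp [Finset.mem_map])
          exact Set.indicator_apply_eq_zero.mpr (fun _ => by rw [hφ2]; exact if_neg hji))]
    rw [Finset.sum_map]
    simp only [Function.Embedding.coeFn_mk]
    refine Finset.sum_congr rfl fun x _ => ?_
    by_cases hmem : (Sum.inr ⟨i,x⟩ : ℕ ⊕ (Σ i : ℕ, Fin (n i))) ∈ G.neighborSet v
    · have hadj : G.Adj v (Sum.inr ⟨i,x⟩) := hmem
      rw [Set.indicator_of_mem hmem, if_pos hadj, hφ2, if_pos rfl]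
    · have hadj : ¬ G.Adj v (Sum.inr ⟨i,x⟩) := hmem
      rw [Set.indicator_of_notMem hmem, if_neg hadj]
  have hval1 : ∀ i, (A (φ i) : ∀ _ : ℕ ⊕ (Σ i : ℕ, Fin (n i)), ℂ) (Sum.inl (k i))
      = ((1 / Real.sqrt (n i) : ℝ) : ℂ) := by
    intro i
    rw [hsum]
    have hcond : ∀ x : Fin (n i), (G.Adj (Sum.inl (k i)) (Sum.inr ⟨i, x⟩)) ↔ x = u1 i := by
      intro x
      rw [ha1]
      constructor
      · rintro (⟨-, h⟩ | ⟨h, -⟩)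
        · exact h
        · exact absurd h (hklt i).ne
      · intro h
        exact Or.inl ⟨rfl, h⟩
    simp only [hcond]
    simp
  have hval2 : ∀ i, (A (φ i) : ∀ _ : ℕ ⊕ (Σ i : ℕ, Fin (n i)), ℂ) (Sum.inl (k (i+1)))
      = ((1 / Real.sqrt (n i) : ℝ) : ℂ) := by
    intro i
    rw [hsum]
    have hcond : ∀ x : Fin (n i), (G.Adj (Sum.inl (k (i+1))) (Sum.inr ⟨i, x⟩)) ↔ x = u2 i := by
      intro x
      rw [ha1]
      constructor
      · rintro (⟨h, -⟩ | ⟨-, h⟩)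
        · exact absurd h.symm (hklt i).ne
        · exact h
      · intro h
        exact Or.inr ⟨rfl, h⟩
    simp only [hcond]
    simp
  have hval3 : ∀ i a, a ≠ k i → a ≠ k (i+1) →
      (A (φ i) : ∀ _ : ℕ ⊕ (Σ i : ℕ, Fin (n i)), ℂ) (Sum.inl a) = 0 := by
    intro i a h1 h2
    rw [hsum]
    refine Finset.sum_eq_zero fun x _ => ?_
    rw [if_neg]
    rw [ha1]
    rintro (⟨h, -⟩ | ⟨h, -⟩)
    · exact h1 h
    · exact h2 h
  have hval4 : ∀ i (y : Fin (n i)),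
      (A (φ i) : ∀ _ : ℕ ⊕ (Σ i : ℕ, Fin (n i)), ℂ) (Sum.inr ⟨i, y⟩)
        = (d : ℂ) * ((1 / Real.sqrt (n i) : ℝ) : ℂ) := by
    intro i y
    rw [hsum]
    have hcond : ∀ x : Fin (n i),
        (G.Adj (Sum.inr ⟨i, y⟩) (Sum.inr ⟨i, x⟩)) ↔ x ∈ (Gi i).neighborFinset y := by
      intro x
      rw [ha2, SimpleGraph.mem_neighborFinset]
    simp only [hcond]
    rw [Finset.sum_ite_mem, Finset.univ_inter, Finset.sum_const,
      (Gi i).card_neighborFinset_eq_degree y, hreg i y, nsmul_eq_mul]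
  have hval5 : ∀ i j (y : Fin (n j)), j ≠ i →
      (A (φ i) : ∀ _ : ℕ ⊕ (Σ i : ℕ, Fin (n i)), ℂ) (Sum.inr ⟨j, y⟩) = 0 := by
    intro i j y hji
    rw [hsum]
    refine Finset.sum_eq_zero fun x _ => ?_
    exact if_neg (ha3 j i y x hji.symm)
  -- coordinates of the error vector
  have hecoe : ∀ i (v : ℕ ⊕ (Σ i : ℕ, Fin (n i))),
      ((A (φ i) - (d : ℂ) • φ i : lp (fun _ : ℕ ⊕ (Σ i : ℕ, Fin (n i)) => ℂ) 2)
          : ∀ _ : ℕ ⊕ (Σ i : ℕ, Fin (n i)), ℂ) v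
        = (A (φ i) : ∀ _ : ℕ ⊕ (Σ i : ℕ, Fin (n i)), ℂ) v
            - (d : ℂ) * (φ i : ∀ _ : ℕ ⊕ (Σ i : ℕ, Fin (n i)), ℂ) v := by
    intro i v
    rw [lp.coeFn_sub, Pi.sub_apply, lp.coeFn_smul, Pi.smul_apply, smul_eq_mul]
  have hczero : ∀ i (v : ℕ ⊕ (Σ i : ℕ, Fin (n i))), v ≠ Sum.inl (k i) → v ≠ Sum.inl (k (i+1)) →
      ((A (φ i) - (d : ℂ) • φ i : lp (fun _ : ℕ ⊕ (Σ i : ℕ, Fin (n i)) => ℂ) 2)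
          : ∀ _ : ℕ ⊕ (Σ i : ℕ, Fin (n i)), ℂ) v = 0 := by
    intro i v hv1 hv2
    rw [hecoe]
    rcases v with a | ⟨j, y⟩
    · rw [hval3 i a (fun h => hv1 (by rw [h])) (fun h => hv2 (by rw [h])), hφ1, mul_zero, sub_zero]
    · by_cases hji : j = i
      · subst hji
        rw [hval4, hφ2, if_pos rfl, sub_self]
      · rw [hval5 i j y hji, hφ2, if_neg hji, mul_zero, sub_zero]
  have hrsq : ∀ i, ‖((1 / Real.sqrt (n i) : ℝ) : ℂ)‖ ^ (2:ℝ) = 1 / (n i : ℝ) := by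
    intro i
    have hr : (0:ℝ) ≤ 1 / Real.sqrt (n i) := by positivity
    rw [Complex.norm_real, Real.norm_eq_abs, abs_of_nonneg hr,
      show ((2:ℝ)) = ((2:ℕ):ℝ) by norm_num, Real.rpow_natCast, div_pow, one_pow,
      Real.sq_sqrt (le_of_lt (hnR i))]
  have hnormsq : ∀ i, ‖A (φ i) - (d : ℂ) • φ i‖ ^ 2 = 2 / (n i : ℝ) := by
    intro i
    have h2 : ‖A (φ i) - (d : ℂ) • φ i‖ ^ (2:ℝ)
        = ∑' v, ‖((A (φ i) - (d : ℂ) • φ i : lp (fun _ : ℕ ⊕ (Σ i : ℕ, Fin (n i)) => ℂ) 2)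
            : ∀ _ : ℕ ⊕ (Σ i : ℕ, Fin (n i)), ℂ) v‖ ^ (2:ℝ) := by
      have := lp.norm_rpow_eq_tsum (p := 2) (by norm_num) (A (φ i) - (d : ℂ) • φ i)
      simpa using this
    have hSne : (Sum.inl (k i) : ℕ ⊕ (Σ i : ℕ, Fin (n i))) ≠ Sum.inl (k (i+1)) := by
      simp [(hklt i).ne]
    rw [tsum_eq_sum (s := {Sum.inl (k i), Sum.inl (k (i+1))})
      (by
        intro v hv
        have hv1 : v ≠ Sum.inl (k i) := by
          intro h; exact hv (by rw [h]; simp)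
        have hv2 : v ≠ Sum.inl (k (i+1)) := by
          intro h; exact hv (by rw [h]; simp)
        rw [hczero i v hv1 hv2]
        simp [Real.zero_rpow])] at h2
    rw [Finset.sum_pair hSne] at h2
    have he1 : ((A (φ i) - (d : ℂ) • φ i : lp (fun _ : ℕ ⊕ (Σ i : ℕ, Fin (n i)) => ℂ) 2)
        : ∀ _ : ℕ ⊕ (Σ i : ℕ, Fin (n i)), ℂ) (Sum.inl (k i)) = ((1 / Real.sqrt (n i) : ℝ) : ℂ) := by
      rw [hecoe, hval1, hφ1, mul_zero, sub_zero]
    have he2 : ((A (φ i) - (d : ℂ) • φ i : lp (fun _ : ℕ ⊕ (Σ i : ℕ, Fin (n i)) => ℂ) 2)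
        : ∀ _ : ℕ ⊕ (Σ i : ℕ, Fin (n i)), ℂ) (Sum.inl (k (i+1)))
          = ((1 / Real.sqrt (n i) : ℝ) : ℂ) := by
      rw [hecoe, hval2, hφ1, mul_zero, sub_zero]
    rw [he1, he2, hrsq i] at h2
    have h3 : ‖A (φ i) - (d : ℂ) • φ i‖ ^ (2:ℝ) = ‖A (φ i) - (d : ℂ) • φ i‖ ^ 2 := by
      rw [show ((2:ℝ)) = ((2:ℕ):ℝ) by norm_num, Real.rpow_natCast]
    rw [h3] at h2
    rw [h2]
    ring
  refine ⟨hnormsq, ?_⟩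
  -- norms of φ i
  have hφn1 : ∀ i, ‖φ i‖ = 1 := by
    intro i
    have h2 : ‖φ i‖ ^ (2:ℝ)
        = ∑' v, ‖(φ i : ∀ _ : ℕ ⊕ (Σ i : ℕ, Fin (n i)), ℂ) v‖ ^ (2:ℝ) := by
      have := lp.norm_rpow_eq_tsum (p := 2) (by norm_num) (φ i)
      simpa using this
    have hemb : Function.Injective
        (fun x : Fin (n i) => (Sum.inr ⟨i, x⟩ : ℕ ⊕ (Σ i : ℕ, Fin (n i)))) := by
      intro x y hxy
      simpa using hxy
    rw [tsum_eq_sum (s := Finset.univ.map ⟨_, hemb⟩)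
      (by
        intro b hb
        rcases b with a | ⟨j, x⟩
        · rw [hφ1]
          simp [Real.zero_rpow]
        · have hji : j ≠ i := by
            intro h; subst h
            exact hb (by simp [Finset.mem_map])
          rw [hφ2, if_neg hji]
          simp [Real.zero_rpow])] at h2
    rw [Finset.sum_map] at h2
    simp only [Function.Embedding.coeFn_mk] at h2
    have hterm : ∀ x : Fin (n i),
        ‖(φ i : ∀ _ : ℕ ⊕ (Σ i : ℕ, Fin (n i)), ℂ) (Sum.inr ⟨i, x⟩)‖ ^ (2:ℝ)
          = 1 / (n i : ℝ) := by
      intro x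
      rw [hφ2, if_pos rfl, hrsq i]
    rw [Finset.sum_congr rfl (fun x _ => hterm x), Finset.sum_const, Finset.card_univ,
      Fintype.card_fin, nsmul_eq_mul, mul_one_div, div_self (ne_of_gt (hnR i))] at h2
    have h3 : ‖φ i‖ ^ (2:ℝ) = ‖φ i‖ ^ 2 := by
      rw [show ((2:ℝ)) = ((2:ℕ):ℝ) by norm_num, Real.rpow_natCast]
    rw [h3] at h2
    calc ‖φ i‖ = Real.sqrt (‖φ i‖ ^ 2) := (Real.sqrt_sq (norm_nonneg _)).symm
      _ = 1 := by rw [h2, Real.sqrt_one]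
  have horth : Orthonormal ℂ φ := by
    refine ⟨hφn1, ?_⟩
    intro i j hij
    rw [lp.inner_eq_tsum]
    have hterm : ∀ v : ℕ ⊕ (Σ i : ℕ, Fin (n i)),
        (inner ℂ ((φ i : ∀ _ : ℕ ⊕ (Σ i : ℕ, Fin (n i)), ℂ) v)
          ((φ j : ∀ _ : ℕ ⊕ (Σ i : ℕ, Fin (n i)), ℂ) v) : ℂ) = 0 := by
      intro v
      rw [RCLike.inner_apply']
      rcases v with a | ⟨m, x⟩
      · rw [hφ1, map_zero, zero_mul]
      · by_cases hmi : m = i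
        · subst hmi
          rw [hφ2 j m x, if_neg hij, mul_zero]
        · rw [hφ2 i m x, if_neg hmi, map_zero, zero_mul]
    rw [tsum_congr hterm, tsum_zero]
  have hsa : IsSelfAdjoint A := graph_isSelfAdjoint G A hA
  have htendnorm : Tendsto (fun i => ‖A (φ i) - (d : ℂ) • φ i‖) atTop (nhds 0) := by
    have hnormeq : ∀ i, ‖A (φ i) - (d : ℂ) • φ i‖ = Real.sqrt (2 / (n i : ℝ)) := by
      intro i
      rw [← Real.sqrt_sq (norm_nonneg (A (φ i) - (d : ℂ) • φ i)), hnormsq i]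
    simp only [hnormeq]
    have h1 : Tendsto (fun i => ((n i : ℝ))) atTop atTop :=
      tendsto_natCast_atTop_atTop.comp hninf
    have h2 : Tendsto (fun i => (2:ℝ) / (n i : ℝ)) atTop (nhds 0) :=
      Tendsto.div_atTop tendsto_const_nhds h1
    have h3 := h2.sqrt
    rwa [Real.sqrt_zero] at h3
  have := weyl_essSpectrum A hsa (d : ℝ) φ horth (by
    simpa using htendnorm)
  simpa using this
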